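/- arXiv:1612.09246 — 11 statements merged into one kernel-verified Lean document; each statement's English description precedes it below -/
import Mathlib

section
/- Let Λ be a symmetric subset containing the identity of an lcsc group G which is relatively dense. Then the following are equivalent: (i) Λ is a uniform approximate lattice (uniformly discrete and Λ² ⊂ FΛ for some finite F); (ii) Λᵏ is uniformly discrete for all k ≥ 1; (iii) Λ⁶ is discrete; (iv) Λ³ is locally finite (i.e., closed and discrete). -/
open scoped Pointwise
open Filter Topology

private lemma aux_pow_finite {G : Type*} [Group G] {s : Set G} (hs : s.Finite) :
    ∀ n : ℕ, (s ^ n).Finite := by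
  intro n
  induction n with
  | zero => simp only [pow_zero]; exact Set.finite_one
  | succ n ih => rw [pow_succ]; exact ih.mul hs

private lemma aux_closed_of_ud {G : Type*} [MetricSpace G] {s : Set G} {r : ℝ} (hr : 0 < r)
    (h : ∀ x ∈ s, ∀ y ∈ s, x ≠ y → r ≤ dist x y) : IsClosed s := by
  rw [← closure_subset_iff_isClosed]
  intro g hg
  obtain ⟨x, hx, hgx⟩ := Metric.mem_closure_iff.1 hg (r / 2) (by linarith)
  by_contra hgs
  have hgne : g ≠ x := fun e => hgs (e ▸ hx)
  have hdpos : 0 < dist g x := dist_pos.2 hgne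
  obtain ⟨y, hy, hgy⟩ := Metric.mem_closure_iff.1 hg (min (r / 2) (dist g x))
    (lt_min (by linarith) hdpos)
  have hyx : y ≠ x := by
    intro e
    rw [e] at hgy
    exact absurd (min_le_right (r / 2) (dist g x)) (not_le.2 hgy)
  have hlt : dist x y < r := by
    have h1 : dist x g < r / 2 := by rwa [dist_comm]
    have h2 : dist g y < r / 2 := lt_of_lt_of_le hgy (min_le_left _ _)
    calc dist x y ≤ dist x g + dist g y := dist_triangle _ _ _
      _ < r / 2 + r / 2 := by linarith
      _ = r := by ring
  exact absurd (h x hx y hy (Ne.symm hyx)) (not_le.2 hlt)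

private lemma aux_discrete_of_ud {G : Type*} [MetricSpace G] {s : Set G} {r : ℝ} (hr : 0 < r)
    (h : ∀ x ∈ s, ∀ y ∈ s, x ≠ y → r ≤ dist x y) : DiscreteTopology s := by
  rw [discreteTopology_iff_isOpen_singleton]
  rintro ⟨x, hx⟩
  rw [isOpen_induced_iff]
  refine ⟨Metric.ball x r, Metric.isOpen_ball, ?_⟩
  ext ⟨y, hy⟩
  simp only [Set.mem_preimage, Metric.mem_ball, Set.mem_singleton_iff, Subtype.mk.injEq]
  constructor
  · intro hd
    by_contra hne
    exact absurd (h x hx y hy (Ne.symm hne)) (by rw [dist_comm] at hd; linarith)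
  · rintro rfl; simpa using hr

private lemma aux_isolated {G : Type*} [MetricSpace G] (s : Set G) [DiscreteTopology s]
    (x : G) (hx : x ∈ s) : ∃ ε > 0, ∀ y ∈ s, dist x y < ε → y = x := by
  have h : IsOpen ({⟨x, hx⟩} : Set s) := isOpen_discrete _
  rw [isOpen_induced_iff] at h
  obtain ⟨U, hU, hU2⟩ := h
  obtain ⟨ε, hε, hball⟩ := Metric.isOpen_iff.1 hU x (by
    have : (⟨x, hx⟩ : s) ∈ (Subtype.val ⁻¹' U : Set s) := by rw [hU2]; rfl
    exact this)
  refine ⟨ε, hε, fun y hy hd => ?_⟩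
  have : (⟨y, hy⟩ : s) ∈ (Subtype.val ⁻¹' U : Set s) := hball (by simpa [dist_comm] using hd)
  rw [hU2] at this
  simpa using congrArg Subtype.val this

/-- For a symmetric relatively dense subset `Λ ∋ 1` of an lcsc group `G`,
the following are equivalent: (i) `Λ` is a uniform approximate lattice (uniformly discrete
and `Λ² ⊆ FΛ` for some finite `F`); (ii) `Λᵏ` is uniformly discrete for all `k ≥ 1`;
(iii) `Λ⁶` is discrete; (iv) `Λ³` is locally finite (closed and discrete). -/
theorem uniformApproximateLattice_tfae
    {G : Type*} [Group G] [MetricSpace G] [IsTopologicalGroup G]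
    [ProperSpace G] [SecondCountableTopology G]
    (hleft : ∀ g x y : G, dist (g * x) (g * y) = dist x y)
    (Λ : Set G) (hsym : Λ⁻¹ = Λ) (hone : (1 : G) ∈ Λ)
    (hdense : ∃ R > 0, ∀ g : G, ∃ x ∈ Λ, dist g x < R) :
    List.TFAE
      [ (∃ r > 0, ∀ x ∈ Λ, ∀ y ∈ Λ, x ≠ y → r ≤ dist x y) ∧
          ∃ F : Finset G, Λ * Λ ⊆ (F : Set G) * Λ,
        ∀ k : ℕ, 1 ≤ k → ∃ r > 0, ∀ x ∈ Λ ^ k, ∀ y ∈ Λ ^ k, x ≠ y → r ≤ dist x y,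
        DiscreteTopology ↥(Λ ^ 6),
        IsClosed (Λ ^ 3) ∧ DiscreteTopology ↥(Λ ^ 3) ] := by
  -- basic facts
  have hdist : ∀ x y : G, dist x y = dist 1 (x⁻¹ * y) := by
    intro x y
    have := hleft x⁻¹ x y
    rw [inv_mul_cancel] at this
    exact this.symm
  have hpowinv : ∀ n : ℕ, (Λ ^ n)⁻¹ = Λ ^ n := by
    intro n; rw [← inv_pow, hsym]
  have hinvmem : ∀ {n : ℕ} {x : G}, x ∈ Λ ^ n → x⁻¹ ∈ Λ ^ n := by
    intro n x hx
    rw [← hpowinv n, Set.mem_inv, inv_inv]; exact hx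
  have honepow : ∀ n : ℕ, (1 : G) ∈ Λ ^ n := fun n => Set.one_mem_pow hone
  tfae_have 1 → 2 := by
    rintro ⟨⟨r, hr, hud⟩, F, hF⟩ k hk
    have hclosed : IsClosed Λ := aux_closed_of_ud hr hud
    -- Λ^(n+1) ⊆ F^n * Λ
    have hpow : ∀ n : ℕ, Λ ^ (n + 1) ⊆ (F : Set G) ^ n * Λ := by
      intro n
      induction n with
      | zero => simp
      | succ n ih =>
        calc Λ ^ (n + 2) = Λ ^ (n + 1) * Λ := by rw [pow_succ]
          _ ⊆ ((F : Set G) ^ n * Λ) * Λ := Set.mul_subset_mul_right ih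
          _ = (F : Set G) ^ n * (Λ * Λ) := by rw [mul_assoc]
          _ ⊆ (F : Set G) ^ n * ((F : Set G) * Λ) := Set.mul_subset_mul_left hF
          _ = (F : Set G) ^ (n + 1) * Λ := by rw [← mul_assoc, ← pow_succ]
    set S : Set G := (F : Set G) ^ (2 * k - 1) with hS
    have hSfin : S.Finite := aux_pow_finite F.finite_toSet _
    -- a positive lower bound on dist 1 (f * l) for f ∈ S, l ∈ Λ, f*l ≠ 1
    have key : ∃ c > 0, ∀ f ∈ S, ∀ l ∈ Λ, f * l ≠ 1 → c ≤ dist 1 (f * l) := by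
      refine Set.Finite.induction_on (motive := fun s _ =>
        ∃ c > 0, ∀ f ∈ s, ∀ l ∈ Λ, f * l ≠ 1 → c ≤ dist 1 (f * l)) S hSfin ⟨1, one_pos, by simp⟩ ?_
      rintro a s _ _ ⟨c, hc, hcb⟩
      have hda : ∀ l : G, dist 1 (a * l) = dist a⁻¹ l := by
        intro l
        have := hleft a⁻¹ 1 (a * l)
        rw [mul_one, ← mul_assoc, inv_mul_cancel, one_mul] at this
        exact this.symm
      by_cases ha : a⁻¹ ∈ Λ
      · refine ⟨min c r, lt_min hc hr, ?_⟩
        rintro f hf l hl hne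
        rcases Set.mem_insert_iff.1 hf with rfl | hf
        · have hlne : l ≠ f⁻¹ := by
            intro e; exact hne (by rw [e, mul_inv_cancel])
          rw [hda l]
          exact le_trans (min_le_right _ _) (hud _ ha _ hl (Ne.symm hlne))
        · exact le_trans (min_le_left _ _) (hcb f hf l hl hne)
      · have hpos : 0 < Metric.infDist a⁻¹ Λ := by
          rwa [← hclosed.notMem_iff_infDist_pos ⟨1, hone⟩]
        refine ⟨min c (Metric.infDist a⁻¹ Λ), lt_min hc hpos, ?_⟩
        rintro f hf l hl hne
        rcases Set.mem_insert_iff.1 hf with rfl | hf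
        · rw [hda l]
          exact le_trans (min_le_right _ _) (Metric.infDist_le_dist_of_mem hl)
        · exact le_trans (min_le_left _ _) (hcb f hf l hl hne)
    obtain ⟨c, hc, hcb⟩ := key
    refine ⟨c, hc, ?_⟩
    intro x hx y hy hne
    have hmem : x⁻¹ * y ∈ Λ ^ (2 * k) := by
      have : x⁻¹ * y ∈ Λ ^ k * Λ ^ k := Set.mul_mem_mul (hinvmem hx) hy
      rwa [← pow_add, show k + k = 2 * k by ring] at this
    have h2k : 2 * k = (2 * k - 1) + 1 := by omega
    rw [h2k] at hmem
    obtain ⟨f, hf, l, hl, hfl⟩ := hpow (2 * k - 1) hmem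
    have hfl' : f * l = x⁻¹ * y := hfl
    have hne1 : f * l ≠ 1 := fun e => hne (inv_mul_eq_one.mp (hfl'.symm.trans e))
    rw [hdist x y, ← hfl']
    exact hcb f hf l hl hne1
  tfae_have 2 → 3 := by
    intro h
    obtain ⟨r, hr, hud⟩ := h 6 (by norm_num)
    exact aux_discrete_of_ud hr hud
  tfae_have 3 → 4 := by
    intro h
    obtain ⟨ε, hε, hiso⟩ := aux_isolated (Λ ^ 6) 1 (honepow 6)
    have hud : ∀ x ∈ Λ ^ 3, ∀ y ∈ Λ ^ 3, x ≠ y → ε ≤ dist x y := by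
      intro x hx y hy hne
      by_contra hlt
      rw [not_le, hdist x y] at hlt
      have hmem : x⁻¹ * y ∈ Λ ^ 6 := by
        have : x⁻¹ * y ∈ Λ ^ 3 * Λ ^ 3 := Set.mul_mem_mul (hinvmem hx) hy
        rwa [← pow_add] at this
      exact hne (inv_mul_eq_one.mp (hiso _ hmem hlt))
    exact ⟨aux_closed_of_ud hε hud, aux_discrete_of_ud hε hud⟩
  tfae_have 4 → 1 := by
    rintro ⟨hcl, hdisc⟩
    obtain ⟨ε, hε, hiso⟩ := aux_isolated (Λ ^ 3) 1 (honepow 3)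
    constructor
    · -- uniform discreteness of Λ
      refine ⟨ε, hε, ?_⟩
      intro x hx y hy hne
      by_contra hlt
      rw [not_le, hdist x y] at hlt
      have hmem : x⁻¹ * y ∈ Λ ^ 3 := by
        have h2 : x⁻¹ * y ∈ Λ * Λ := Set.mul_mem_mul
          (by rw [← hsym, Set.mem_inv, inv_inv]; exact hx) hy
        have h3 : (x⁻¹ * y) * 1 ∈ (Λ * Λ) * Λ := Set.mul_mem_mul h2 hone
        rw [mul_one] at h3
        rwa [show Λ ^ 3 = Λ * Λ * Λ by rw [pow_succ, pow_two]]
      exact hne (inv_mul_eq_one.mp (hiso _ hmem hlt))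
    · -- Λ² ⊆ F Λ
      obtain ⟨R, hR, hRd⟩ := hdense
      have hcomp : IsCompact (Λ ^ 3 ∩ Metric.closedBall 1 R) :=
        (isCompact_closedBall 1 R).inter_left hcl
      have hdisc' : DiscreteTopology ↥(Λ ^ 3 ∩ Metric.closedBall 1 R) :=
        DiscreteTopology.of_subset hdisc Set.inter_subset_left
      have hfin : (Λ ^ 3 ∩ Metric.closedBall 1 R).Finite := hcomp.finite (isDiscrete_iff_discreteTopology.mpr hdisc')
      refine ⟨hfin.toFinset, ?_⟩
      rintro p hp
      obtain ⟨x, hx, y, hy, rfl⟩ := hp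
      obtain ⟨z, hz, hdz⟩ := hRd (x * y)⁻¹
      have hw3 : x * y * z ∈ Λ ^ 3 := by
        have h2 : x * y ∈ Λ * Λ := Set.mul_mem_mul hx hy
        have : (x * y) * z ∈ (Λ * Λ) * Λ := Set.mul_mem_mul h2 hz
        rwa [show Λ ^ 3 = Λ * Λ * Λ by rw [pow_succ, pow_two]]
      have hwball : x * y * z ∈ Metric.closedBall 1 R := by
        rw [Metric.mem_closedBall]
        have h := hleft (x * y)⁻¹ (x * y * z) 1
        rw [mul_one] at h
        have e : (x * y)⁻¹ * (x * y * z) = z := by group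
        rw [e] at h
        rw [← h, dist_comm]
        exact le_of_lt hdz
      have hzinv : z⁻¹ ∈ Λ := by rw [← hsym, Set.mem_inv, inv_inv]; exact hz
      have : (x * y * z) * z⁻¹ ∈ (↑hfin.toFinset : Set G) * Λ := by
        refine Set.mul_mem_mul ?_ hzinv
        rw [Set.Finite.coe_toFinset]
        exact ⟨hw3, hwball⟩
      rwa [mul_assoc, mul_inv_cancel, mul_one] at this
  tfae_finish
end

section
/- Let Λ ⊂ G be a uniform approximate lattice in an lcsc group G, and let Λ₀ ⊂ Λ be a symmetric subset containing the identity. Then the following are equivalent: (i) Λ₀ is a uniform approximate lattice in G; (ii) Λ₀ is relatively dense in G; (iii) Λ₀ is relatively dense in Λ (i.e., there is a finite set K₁ with Λ ⊂ Λ₀K₁). -/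
open scoped Pointwise
open Filter Topology

/-- A uniform approximate lattice in a group `G` with a (proper left-invariant) metric:
a uniformly discrete, relatively dense, symmetric subset containing the identity with
`Λ² ⊆ FΛ` for some finite `F`. -/
def IsUniformApproximateLattice {G : Type*} [Group G] [MetricSpace G] (Λ : Set G) : Prop :=
  (∃ r > 0, ∀ x ∈ Λ, ∀ y ∈ Λ, x ≠ y → r ≤ dist x y) ∧
  (∃ R > 0, ∀ g : G, ∃ x ∈ Λ, dist g x < R) ∧
  Λ⁻¹ = Λ ∧ (1 : G) ∈ Λ ∧ ∃ F : Finset G, Λ * Λ ⊆ (F : Set G) * Λ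

/-- An `r`-separated subset of a compact set is finite. -/
lemma finite_of_separated_of_subset_compact {X : Type*} [MetricSpace X] {S K : Set X}
    (hK : IsCompact K) (hSK : S ⊆ K) {r : ℝ} (hr : 0 < r)
    (hsep : ∀ x ∈ S, ∀ y ∈ S, x ≠ y → r ≤ dist x y) : S.Finite := by
  obtain ⟨t, htfin, hcov⟩ := Metric.totallyBounded_iff.mp hK.totallyBounded (r / 2)
    (by linarith)
  have hex : ∀ x : S, ∃ y ∈ t, (x : X) ∈ Metric.ball y (r / 2) := by
    intro x
    simpa using Set.mem_iUnion₂.mp (hcov (hSK x.2))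
  choose f hft hfb using hex
  have : Finite t := htfin.to_subtype
  have hinj : Function.Injective (fun x : S => (⟨f x, hft x⟩ : t)) := by
    intro x y hxy
    have hfe : f x = f y := congrArg Subtype.val hxy
    have hd : dist (x : X) (y : X) < r := by
      calc dist (x : X) (y : X) ≤ dist (x : X) (f x) + dist (f y) (y : X) := by
            rw [hfe]; exact dist_triangle _ _ _
        _ < r / 2 + r / 2 := by
            have h1 := hfb x
            have h2 := hfb y
            rw [Metric.mem_ball] at h1 h2
            rw [dist_comm (f y)]
            linarith
        _ = r := by ring
    by_contra hne
    have hxyne : (x : X) ≠ (y : X) := fun h => hne (Subtype.ext h)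
    exact absurd (hsep x x.2 y y.2 hxyne) (not_le.mpr hd)
  have : Finite S := Finite.of_injective _ hinj
  exact Set.toFinite S

/-- For a symmetric subset `Λ₀ ∋ 1` of a uniform approximate lattice `Λ`,
the following are equivalent: (i) `Λ₀` is a uniform approximate lattice in `G`;
(ii) `Λ₀` is relatively dense in `G`; (iii) `Λ₀` is relatively dense in `Λ`
(i.e. `Λ ⊆ Λ₀K₁` for some finite `K₁`). -/
theorem relDense_subset_of_uniformApproximateLattice_tfae
    {G : Type*} [Group G] [MetricSpace G] [IsTopologicalGroup G]
    [ProperSpace G] [SecondCountableTopology G]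
    (hleft : ∀ g x y : G, dist (g * x) (g * y) = dist x y)
    (Λ Λ₀ : Set G) (hΛ : IsUniformApproximateLattice Λ)
    (hsub : Λ₀ ⊆ Λ) (hsym : Λ₀⁻¹ = Λ₀) (hone : (1 : G) ∈ Λ₀) :
    List.TFAE
      [ IsUniformApproximateLattice Λ₀,
        ∃ K : Set G, IsCompact K ∧ Λ₀ * K = Set.univ,
        ∃ K₁ : Finset G, Λ ⊆ Λ₀ * (K₁ : Set G) ] := by
  classical
  obtain ⟨⟨r, hr, hsep⟩, ⟨R, hR, hdense⟩, hΛsym, hΛone, ⟨F, hF⟩⟩ := hΛ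
  tfae_have 1 → 2 := by
    rintro ⟨-, ⟨R₀, hR₀, hdense₀⟩, -, -, -⟩
    refine ⟨Metric.closedBall 1 R₀, isCompact_closedBall 1 R₀, ?_⟩
    apply Set.eq_univ_of_forall
    intro g
    obtain ⟨x, hx, hgx⟩ := hdense₀ g
    have hd : dist (x⁻¹ * g) 1 = dist g x := by
      rw [← hleft x]; simp
    have hmem : x⁻¹ * g ∈ Metric.closedBall (1 : G) R₀ := by
      rw [Metric.mem_closedBall, hd]; exact hgx.le
    have : g = x * (x⁻¹ * g) := by group
    rw [this]
    exact Set.mul_mem_mul hx hmem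
  tfae_have 2 → 3 := by
    rintro ⟨K, hK, hcov⟩
    set S : Set G := K ∩ ((F : Set G) * Λ) with hS
    have hSfin : S.Finite := by
      have hsub' : S ⊆ ⋃ f ∈ (F : Set G), K ∩ ((f * ·) '' Λ) := by
        rintro x ⟨hxK, hxFΛ⟩
        obtain ⟨f, hf, a, ha, rfl⟩ := hxFΛ
        exact Set.mem_biUnion hf ⟨hxK, a, ha, rfl⟩
      refine Set.Finite.subset (Set.Finite.biUnion F.finite_toSet fun f _ => ?_) hsub'
      refine finite_of_separated_of_subset_compact hK Set.inter_subset_left hr ?_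
      rintro x ⟨-, a, ha, rfl⟩ y ⟨-, b, hb, rfl⟩ hne
      rw [hleft]
      exact hsep a ha b hb (fun h => hne (by rw [h]))
    refine ⟨hSfin.toFinset, fun lam hlam => ?_⟩
    have : lam ∈ Λ₀ * K := by rw [hcov]; trivial
    obtain ⟨s, hs, k, hk, rfl⟩ := this
    have hsinv : s⁻¹ ∈ Λ := hsub (by rw [← hsym]; exact Set.inv_mem_inv.mpr hs)
    have hkFΛ : k ∈ (F : Set G) * Λ := by
      have : k = s⁻¹ * (s * k) := by group
      rw [this]
      exact hF (Set.mul_mem_mul hsinv hlam)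
    have hkS : k ∈ S := ⟨hk, hkFΛ⟩
    exact Set.mul_mem_mul hs (by rwa [Set.Finite.coe_toFinset])
  tfae_have 3 → 1 := by
    rintro ⟨K₁, hK₁⟩
    have hK₁ne : K₁.Nonempty := by
      obtain ⟨s, -, k, hk, -⟩ := hK₁ hΛone
      exact ⟨k, hk⟩
    set M : ℝ := (K₁.image fun k => dist k 1).max' (hK₁ne.image _) with hM
    have hMle : ∀ k ∈ K₁, dist k 1 ≤ M := by
      intro k hk
      exact Finset.le_max' _ _ (Finset.mem_image_of_mem (fun k => dist k 1) hk)
    have hM0 : 0 ≤ M := le_trans dist_nonneg (hMle _ hK₁ne.choose_spec)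
    refine ⟨⟨r, hr, fun x hx y hy => hsep x (hsub hx) y (hsub hy)⟩,
      ⟨R + M, by linarith, fun g => ?_⟩, hsym, hone, ?_⟩
    · obtain ⟨x, hx, hgx⟩ := hdense g
      obtain ⟨s, hs, k, hk, rfl⟩ := hK₁ hx
      refine ⟨s, hs, ?_⟩
      have hds : dist (s * k) s = dist k 1 := by
        rw [← hleft s k 1, mul_one]
      calc dist g s ≤ dist g (s * k) + dist (s * k) s := dist_triangle _ _ _
        _ < R + M := by rw [hds]; have := hMle k hk; linarith
    · refine ⟨F * K₁⁻¹, fun z hz => ?_⟩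
      obtain ⟨a, ha, b, hb, rfl⟩ := hz
      have : a * b ∈ (F : Set G) * Λ :=
        hF (Set.mul_mem_mul (hsub ha) (hsub hb))
      obtain ⟨f, hf, c, hc, hfc⟩ := this
      have hcinv : c⁻¹ ∈ Λ := by rw [← hΛsym]; exact Set.inv_mem_inv.mpr hc
      obtain ⟨s, hs, k, hk, hsk⟩ := hK₁ hcinv
      have hsinv : s⁻¹ ∈ Λ₀ := by rw [← hsym]; exact Set.inv_mem_inv.mpr hs
      have hc' : c = k⁻¹ * s⁻¹ := by
        have : c⁻¹ = s * k := hsk.symm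
        rw [← inv_inv c, this]; group
      have heq : a * b = (f * k⁻¹) * s⁻¹ := by rw [← hfc, hc']; group
      show a * b ∈ _
      rw [heq]
      have hfk : f * k⁻¹ ∈ ((F * K₁⁻¹ : Finset G) : Set G) := by
        rw [Finset.coe_mul]
        exact Set.mul_mem_mul hf (by rw [Finset.coe_inv]; exact Set.inv_mem_inv.mpr hk)
      exact Set.mul_mem_mul hfk hsinv
  tfae_finish
end

section
/- Let (G, H, Γ) be a cut-and-project scheme: Γ < G × H a lattice projecting injectively to G and densely to H, with projections π_G, π_H. Let W₀ ⊂ H be compact with non-empty interior and set Λ = π_G((G × W₀) ∩ Γ). Then Λ⁻¹Λ is uniformly discrete in G; in particular Λ has finite local complexity. -/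
open scoped Pointwise
open Filter Topology

/-- A uniformly separated set in a metric space is closed and discrete. -/
lemma sep_closed_discrete {G : Type*} [MetricSpace G] {S : Set G} {r : ℝ} (hr : 0 < r)
    (h : ∀ x ∈ S, ∀ y ∈ S, x ≠ y → r ≤ dist x y) :
    IsClosed S ∧ DiscreteTopology ↥S := by
  constructor
  · rw [← closure_subset_iff_isClosed]
    intro z hz
    by_contra hzS
    obtain ⟨s, hs, hds⟩ := Metric.mem_closure_iff.mp hz (r / 2) (by linarith)
    have hzs : z ≠ s := by rintro rfl; exact hzS hs
    have hdpos : 0 < dist z s := dist_pos.mpr hzs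
    obtain ⟨s', hs', hds'⟩ := Metric.mem_closure_iff.mp hz (min (r / 2) (dist z s))
      (lt_min (by linarith) hdpos)
    have hne : s ≠ s' := by
      rintro rfl
      exact absurd (lt_of_lt_of_le hds' (min_le_right _ _)) (lt_irrefl _)
    have h1 : r ≤ dist s s' := h s hs s' hs' hne
    have h2 : dist s s' ≤ dist s z + dist z s' := dist_triangle _ _ _
    have h3 : dist s z = dist z s := dist_comm _ _
    have h4 : dist z s' < r / 2 := lt_of_lt_of_le hds' (min_le_left _ _)
    linarith
  · apply discreteTopology_iff_isOpen_singleton.mpr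
    intro x
    have hx : ({x} : Set S) = Subtype.val ⁻¹' Metric.ball (x : G) r := by
      ext y
      simp only [Set.mem_singleton_iff, Set.mem_preimage, Metric.mem_ball]
      constructor
      · rintro rfl; simpa using hr
      · intro hy
        by_contra hne
        have : (y : G) ≠ (x : G) := fun he => hne (Subtype.ext he)
        exact absurd hy (not_lt.mpr (h _ y.2 _ x.2 this))
    rw [hx]
    exact Metric.isOpen_ball.preimage continuous_subtype_val

/-- For a cut-and-project scheme `(G, H, Γ)` and a compact window `W₀ ⊆ H`
with nonempty interior, the model set `Λ = π_G((G × W₀) ∩ Γ)` has `Λ⁻¹Λ` uniformly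
discrete; in particular `Λ` has finite local complexity (`Λ⁻¹Λ` closed and discrete). -/
theorem modelSet_inv_mul_uniformlyDiscrete
    {G H : Type*} [Group G] [MetricSpace G] [IsTopologicalGroup G]
    [ProperSpace G] [SecondCountableTopology G]
    [Group H] [TopologicalSpace H] [IsTopologicalGroup H]
    [LocallyCompactSpace H] [SecondCountableTopology H]
    (hleft : ∀ g x y : G, dist (g * x) (g * y) = dist x y)
    (Γ : Subgroup (G × H)) (hdisc : DiscreteTopology ↥Γ)
    (hclosed : IsClosed (Γ : Set (G × H)))
    (hinj : Set.InjOn Prod.fst (Γ : Set (G × H)))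
    (hdense : Dense (Prod.snd '' (Γ : Set (G × H))))
    (W₀ : Set H) (hW₀ : IsCompact W₀) (hWint : (interior W₀).Nonempty)
    (Λ : Set G) (hΛ : Λ = Prod.fst '' ((Γ : Set (G × H)) ∩ Set.univ ×ˢ W₀)) :
    (∃ r > 0, ∀ x ∈ Λ⁻¹ * Λ, ∀ y ∈ Λ⁻¹ * Λ, x ≠ y → r ≤ dist x y) ∧
      IsClosed (Λ⁻¹ * Λ) ∧ DiscreteTopology ↥(Λ⁻¹ * Λ) := by
  classical
  -- The big compact window in `H`.
  set K : Set H := W₀⁻¹ * W₀ * W₀⁻¹ * W₀ with hKdef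
  have hKc : IsCompact K := ((hW₀.inv.mul hW₀).mul hW₀.inv).mul hW₀
  -- the "difference" set in G
  set T : Set G := Prod.fst '' ((Γ : Set (G × H)) ∩ Set.univ ×ˢ K) with hTdef
  -- Step 1: differences of elements of Λ⁻¹Λ lie in T.
  have hmemT : ∀ x ∈ Λ⁻¹ * Λ, ∀ y ∈ Λ⁻¹ * Λ, x⁻¹ * y ∈ T := by
    intro x hx y hy
    rw [Set.mem_mul] at hx hy
    obtain ⟨a, ha, b, hb, rfl⟩ := hx
    obtain ⟨c, hc, d, hd, rfl⟩ := hy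
    rw [Set.mem_inv] at ha hc
    rw [hΛ] at ha hb hc hd
    obtain ⟨γa, ⟨hγa, -, hγa2⟩, hγa1⟩ := ha
    obtain ⟨γb, ⟨hγb, -, hγb2⟩, hγb1⟩ := hb
    obtain ⟨γc, ⟨hγc, -, hγc2⟩, hγc1⟩ := hc
    obtain ⟨γd, ⟨hγd, -, hγd2⟩, hγd1⟩ := hd
    refine ⟨γb⁻¹ * γa * γc⁻¹ * γd, ⟨?_, ⟨trivial, ?_⟩⟩, ?_⟩
    · exact SetLike.mem_coe.mpr
        (Γ.mul_mem (Γ.mul_mem (Γ.mul_mem (Γ.inv_mem hγb) hγa) (Γ.inv_mem hγc)) hγd)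
    · exact Set.mul_mem_mul (Set.mul_mem_mul (Set.mul_mem_mul
        (Set.inv_mem_inv.mpr hγb2) hγa2) (Set.inv_mem_inv.mpr hγc2)) hγd2
    · simp only [Prod.fst_mul, Prod.fst_inv, hγa1, hγb1, hγc1, hγd1]
      group
  -- Step 2: the intersection of Γ with a compact box is finite.
  set F : Set (G × H) := (Γ : Set (G × H)) ∩ (Metric.closedBall (1 : G) 1 ×ˢ K) with hFdef
  have hFfin : F.Finite := by
    have hcpt : IsCompact F :=
      ((isCompact_closedBall (1 : G) 1).prod hKc).inter_left hclosed
    have hdF : DiscreteTopology ↥F := hdisc.of_subset Set.inter_subset_left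
    exact hcpt.finite (isDiscrete_iff_discreteTopology.mpr hdF)
  -- Step 3: minimal distance over the finitely many nontrivial points.
  set Dset : Set ℝ := (fun p : G × H => dist p.1 1) '' {p ∈ F | p.1 ≠ 1} with hDdef
  have hDfin : Dset.Finite := (hFfin.subset (Set.sep_subset _ _)).image _
  have hEfin : (insert (1 : ℝ) Dset).Finite := hDfin.insert 1
  have hEne : hEfin.toFinset.Nonempty := by
    refine ⟨1, ?_⟩
    simp [Set.Finite.mem_toFinset]
  set r : ℝ := hEfin.toFinset.min' hEne with hrdef
  have hr1 : r ≤ 1 := Finset.min'_le _ _ (by simp [Set.Finite.mem_toFinset])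
  have hrpos : 0 < r := by
    have hmem := hEfin.toFinset.min'_mem hEne
    rw [Set.Finite.mem_toFinset, Set.mem_insert_iff] at hmem
    rcases hmem with h1 | h2
    · rw [← hrdef] at h1; rw [h1]; norm_num
    · rw [← hrdef] at h2
      obtain ⟨p, ⟨-, hp⟩, hpd⟩ := h2
      rw [← hpd]
      exact dist_pos.mpr hp
  -- Step 4: separation from 1 for points in T.
  have hsep : ∀ t ∈ T, t ≠ 1 → r ≤ dist t 1 := by
    intro t ht htne
    obtain ⟨γ, ⟨hγ, -, hγ2⟩, rfl⟩ := ht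
    by_cases hball : dist γ.1 1 ≤ 1
    · have hmemF : γ ∈ F := ⟨hγ, Set.mem_prod.mpr ⟨Metric.mem_closedBall.mpr hball, hγ2⟩⟩
      refine Finset.min'_le _ _ ?_
      rw [Set.Finite.mem_toFinset]
      exact Set.mem_insert_of_mem _ ⟨γ, ⟨hmemF, htne⟩, rfl⟩
    · linarith [not_le.mp hball]
  -- Step 5: uniform discreteness of Λ⁻¹Λ.
  have hunif : ∀ x ∈ Λ⁻¹ * Λ, ∀ y ∈ Λ⁻¹ * Λ, x ≠ y → r ≤ dist x y := by
    intro x hx y hy hxy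
    have hne : x⁻¹ * y ≠ 1 := fun h => hxy (inv_mul_eq_one.mp h)
    have := hsep _ (hmemT x hx y hy) hne
    have hd : dist x y = dist (x⁻¹ * y) 1 := by
      rw [dist_comm (x⁻¹ * y) 1]
      calc dist x y = dist (x⁻¹ * x) (x⁻¹ * y) := (hleft x⁻¹ x y).symm
        _ = dist 1 (x⁻¹ * y) := by rw [inv_mul_cancel]
    rw [hd]
    exact this
  obtain ⟨hcl, hds⟩ := sep_closed_discrete hrpos hunif
  exact ⟨⟨r, hrpos, hunif⟩, hcl, hds⟩
end

section
/- Let (G, H, Γ) be a cut-and-project scheme and W₀ ⊂ H compact with non-empty interior. Then the model set Λ = π_G((G × W₀) ∩ Γ) satisfies the approximate group condition: there is a finite set F ⊂ G with Λ² ⊂ FΛ. -/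
open scoped Pointwise
open Filter Topology

/-- For a cut-and-project scheme `(G, H, Γ)` and a compact window `W₀ ⊆ H`
with nonempty interior, the model set `Λ = π_G((G × W₀) ∩ Γ)` satisfies the approximate
group condition: `Λ² ⊆ FΛ` for some finite `F ⊆ G`. -/
theorem modelSet_approximateGroupCondition
    {G H : Type*} [Group G] [TopologicalSpace G] [IsTopologicalGroup G]
    [LocallyCompactSpace G] [SecondCountableTopology G]
    [Group H] [TopologicalSpace H] [IsTopologicalGroup H]
    [LocallyCompactSpace H] [SecondCountableTopology H]
    (Γ : Subgroup (G × H)) (hdisc : DiscreteTopology ↥Γ)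
    (hclosed : IsClosed (Γ : Set (G × H)))
    (hinj : Set.InjOn Prod.fst (Γ : Set (G × H)))
    (hdense : Dense (Prod.snd '' (Γ : Set (G × H))))
    (W₀ : Set H) (hW₀ : IsCompact W₀) (hWint : (interior W₀).Nonempty)
    (Λ : Set G) (hΛ : Λ = Prod.fst '' ((Γ : Set (G × H)) ∩ Set.univ ×ˢ W₀)) :
    ∃ F : Finset G, Λ * Λ ⊆ (F : Set G) * Λ := by
  classical
  -- The translates γ.2 • interior W₀, for γ ∈ Γ, cover all of H, in particular W₀ * W₀.
  have hcover : W₀ * W₀ ⊆ ⋃ γ : Γ, ((γ : G × H).2) • interior W₀ := by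
    intro x _
    have hopen : IsOpen (x • (interior W₀)⁻¹) :=
      (isOpen_interior.inv).smul x
    have hne : (x • (interior W₀)⁻¹).Nonempty := by
      obtain ⟨w, hw⟩ := hWint
      exact ⟨x * w⁻¹, ⟨w⁻¹, Set.inv_mem_inv.2 hw, rfl⟩⟩
    obtain ⟨y, hy, hymem⟩ := hdense.exists_mem_open hopen hne
    obtain ⟨γ, hγ, rfl⟩ := hy
    obtain ⟨w, hw, hwx⟩ := hymem
    rw [Set.mem_inv] at hw
    refine Set.mem_iUnion.2 ⟨⟨γ, hγ⟩, ?_⟩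
    refine ⟨w⁻¹, hw, ?_⟩
    simp only [smul_eq_mul] at hwx ⊢
    rw [← hwx]
    group
  have hWcomp : IsCompact (W₀ * W₀) := hW₀.mul hW₀
  obtain ⟨t, ht⟩ := hWcomp.elim_finite_subcover
    (fun γ : Γ => ((γ : G × H).2) • interior W₀)
    (fun γ => isOpen_interior.smul _) hcover
  refine ⟨t.image (fun γ : Γ => (γ : G × H).1), ?_⟩
  rintro z ⟨a, ha, b, hb, rfl⟩
  rw [hΛ] at ha hb
  obtain ⟨p, ⟨hpΓ, -, hpW⟩, rfl⟩ := ha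
  obtain ⟨q, ⟨hqΓ, -, hqW⟩, rfl⟩ := hb
  have hpq : p * q ∈ (Γ : Set (G × H)) := mul_mem hpΓ hqΓ
  have h2 : (p * q).2 ∈ W₀ * W₀ := Set.mul_mem_mul hpW hqW
  obtain ⟨γ, hγt, hmem⟩ := Set.mem_iUnion₂.1 (ht h2)
  obtain ⟨w, hw, hwx⟩ := hmem
  -- γ⁻¹ * (p*q) has second coordinate w ∈ interior W₀ ⊆ W₀
  have hγinv : ((γ : G × H))⁻¹ * (p * q) ∈ (Γ : Set (G × H)) :=
    mul_mem (inv_mem γ.2) hpq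
  refine ⟨(γ : G × H).1, Finset.mem_coe.2 (Finset.mem_image.2 ⟨γ, hγt, rfl⟩),
    ((γ : G × H)⁻¹ * (p * q)).1, ?_, ?_⟩
  · rw [hΛ]
    refine ⟨(γ : G × H)⁻¹ * (p * q), ⟨hγinv, trivial, ?_⟩, rfl⟩
    have : ((γ : G × H)⁻¹ * (p * q)).2 = ((γ : G × H).2)⁻¹ * (p * q).2 := rfl
    rw [this, ← hwx]
    simpa using interior_subset hw
  · simp
end

section
/- Let G be a compactly generated lcsc group and Λ ⊂ G a uniform approximate lattice. Then the subgroup Λ^∞ generated by Λ is finitely generated; moreover there exists a compact set K ⊂ G generating G such that Λ² ∩ K generates Λ^∞. -/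
open scoped Pointwise
open Filter Topology

/-- A uniformly separated set intersected with a compact set is finite. -/
lemma sep_inter_compact_finite {G : Type*} [MetricSpace G] {S K : Set G} (hK : IsCompact K)
    {r : ℝ} (hr : 0 < r) (hsep : ∀ x ∈ S, ∀ y ∈ S, x ≠ y → r ≤ dist x y) :
    (S ∩ K).Finite := by
  obtain ⟨t, -, htfin, ht⟩ := hK.finite_cover_balls (show (0:ℝ) < r / 2 by positivity)
  have hsub : S ∩ K ⊆ ⋃ y ∈ t, S ∩ Metric.ball y (r / 2) := by
    intro x ⟨hxS, hxK⟩
    obtain ⟨y, hy, hxy⟩ := Set.mem_iUnion₂.mp (ht hxK)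
    exact Set.mem_iUnion₂.mpr ⟨y, hy, hxS, hxy⟩
  refine Set.Finite.subset (Set.Finite.biUnion htfin fun y _ => ?_) hsub
  refine Set.Subsingleton.finite fun a ⟨haS, ha⟩ b ⟨hbS, hb⟩ => ?_
  by_contra hab
  have := hsep a haS b hbS hab
  have : dist a b < r := by
    calc dist a b ≤ dist a y + dist y b := dist_triangle a y b
    _ < r / 2 + r / 2 := by
        rw [dist_comm y b]
        exact add_lt_add (Metric.mem_ball.mp ha) (Metric.mem_ball.mp hb)
    _ = r := by ring
  linarith

/-- If `G` is a compactly generated lcsc group and `Λ ⊆ G` a uniform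
approximate lattice, then the group `Λ^∞` generated by `Λ` is finitely generated;
moreover there is a compact generating set `K` of `G` with `⟨Λ² ∩ K⟩ = ⟨Λ⟩`. -/
theorem uniformApproximateLattice_finitelyGenerated
    {G : Type*} [Group G] [MetricSpace G] [IsTopologicalGroup G]
    [ProperSpace G] [SecondCountableTopology G]
    (hleft : ∀ g x y : G, dist (g * x) (g * y) = dist x y)
    (hcg : ∃ C : Set G, IsCompact C ∧ Subgroup.closure C = ⊤)
    (Λ : Set G) (hΛ : IsUniformApproximateLattice Λ) :
    (Subgroup.closure Λ).FG ∧
      ∃ K : Set G, IsCompact K ∧ Subgroup.closure K = ⊤ ∧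
        Subgroup.closure (Λ * Λ ∩ K) = Subgroup.closure Λ := by
  obtain ⟨⟨r, hr, hsep⟩, ⟨R, hR, hdense⟩, hinv, hone, F, hF⟩ := hΛ
  obtain ⟨C, hC, hCgen⟩ := hcg
  -- bound for C ∪ C⁻¹
  have hCC : IsCompact (C ∪ C⁻¹) := hC.union hC.inv
  obtain ⟨M', hM'⟩ := hCC.isBounded.subset_closedBall 1
  have hM'' : ∀ k ∈ C ∪ C⁻¹, dist (1 : G) k ≤ M' := fun k hk => by
    simpa [dist_comm] using Metric.mem_closedBall.mp (hM' hk)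
  set M : ℝ := max M' 0 with hMdef
  have hM : ∀ k ∈ C ∪ C⁻¹, dist (1 : G) k ≤ M := fun k hk => (hM'' k hk).trans (le_max_left _ _)
  have hM0 : 0 ≤ M := le_max_right _ _
  set K : Set G := C ∪ C⁻¹ ∪ Metric.closedBall 1 (2 * R + M) with hKdef
  have hKcompact : IsCompact K := hCC.union (isCompact_closedBall 1 _)
  have hKgen : Subgroup.closure K = ⊤ := by
    rw [eq_top_iff, ← hCgen]
    exact Subgroup.closure_mono (fun x hx => Or.inl (Or.inl hx))
  set H := Subgroup.closure (Λ * Λ ∩ K) with hHdef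
  -- any element of Λ within distance ≤ R of a point near an H-reachable point...
  have hΛinv : ∀ a ∈ Λ, a⁻¹ ∈ Λ := fun a ha => by rw [← hinv]; exact Set.inv_mem_inv.mpr ha
  -- key step lemma
  have hstep : ∀ a ∈ Λ, ∀ b ∈ Λ, dist a b ≤ 2 * R + M → (a ∈ H → b ∈ H) := by
    intro a ha b hb hab haH
    have h1 : a⁻¹ * b ∈ Λ * Λ := Set.mul_mem_mul (hΛinv a ha) hb
    have h2 : a⁻¹ * b ∈ K := by
      refine Or.inr (Metric.mem_closedBall.mpr ?_)
      have : dist (a⁻¹ * b) 1 = dist a b := by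
        rw [dist_comm, ← hleft a 1 (a⁻¹ * b)]
        simp
      rw [this]; exact hab
    have : a⁻¹ * b ∈ H := Subgroup.subset_closure ⟨h1, h2⟩
    have := H.mul_mem haH this
    simpa [mul_inv_cancel_left] using this
  -- chain argument
  have hchain : ∀ l : List G, (∀ y ∈ l, y ∈ C ∪ C⁻¹) →
      ∀ g : G, (∀ a ∈ Λ, dist g a ≤ R → a ∈ H) →
      ∀ b ∈ Λ, dist (g * l.prod) b ≤ R → b ∈ H := by
    intro l
    induction l with
    | nil => intro _ g hg b hb hdist; exact hg b hb (by simpa using hdist)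
    | cons k l ih =>
      intro hmem g hg
      have hk : dist (1 : G) k ≤ M := hM k (hmem k (List.mem_cons_self (a := k) (l := l)))
      have hg' : ∀ a ∈ Λ, dist (g * k) a ≤ R → a ∈ H := by
        intro a ha hda
        obtain ⟨a₀, ha₀, hda₀⟩ := hdense g
        have ha₀H : a₀ ∈ H := hg a₀ ha₀ hda₀.le
        refine hstep a₀ ha₀ a ha ?_ ha₀H
        calc dist a₀ a ≤ dist a₀ g + dist g (g * k) + dist (g * k) a :=
          dist_triangle4 a₀ g (g * k) a
        _ ≤ R + M + R := by
            have h1 : dist a₀ g ≤ R := by rw [dist_comm]; exact hda₀.le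
            have h2 : dist g (g * k) = dist 1 k := by
              calc dist g (g * k) = dist (g * 1) (g * k) := by rw [mul_one]
              _ = dist 1 k := hleft g 1 k
            linarith [h2 ▸ hk]
        _ = 2 * R + M := by ring
      intro b hb hdist
      have := ih (fun y hy => hmem y (List.mem_cons_of_mem k hy)) (g * k) hg' b hb
      apply this
      rw [List.prod_cons, ← mul_assoc] at hdist
      exact hdist
  have hbase : ∀ a ∈ Λ, dist (1 : G) a ≤ R → a ∈ H := by
    intro a ha hda
    refine Subgroup.subset_closure ⟨?_, Or.inr (Metric.mem_closedBall.mpr ?_)⟩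
    · simpa using Set.mul_mem_mul hone ha
    · rw [dist_comm] at hda; linarith
  have hΛsub : Λ ⊆ (H : Set G) := by
    intro l hl
    have : l ∈ Subgroup.closure C := hCgen ▸ Subgroup.mem_top l
    have : l ∈ Submonoid.closure (C ∪ C⁻¹) := by
      rw [← Subgroup.closure_toSubmonoid] at *
      exact this
    obtain ⟨L, hL, hLprod⟩ := Submonoid.exists_list_of_mem_closure this
    have := hchain L hL 1 hbase l hl (by simp [hLprod, hR.le])
    exact this
  have hmain : H = Subgroup.closure Λ := by
    apply le_antisymm
    · apply Subgroup.closure_le (Subgroup.closure Λ) |>.mpr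
      intro x ⟨hx, _⟩
      obtain ⟨a, ha, b, hb, rfl⟩ := hx
      exact (Subgroup.closure Λ).mul_mem (Subgroup.subset_closure ha)
        (Subgroup.subset_closure hb)
    · exact Subgroup.closure_le H |>.mpr hΛsub
  -- finiteness of Λ * Λ ∩ K
  have hfin : (Λ * Λ ∩ K).Finite := by
    have hsub : Λ * Λ ∩ K ⊆ ⋃ f ∈ F, ((f • Λ : Set G) ∩ K) := by
      intro x ⟨hx, hxK⟩
      obtain ⟨f, hf, a, ha, rfl⟩ := hF hx
      exact Set.mem_iUnion₂.mpr ⟨f, hf, ⟨a, ha, rfl⟩, hxK⟩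
    refine Set.Finite.subset (Set.Finite.biUnion F.finite_toSet fun f _ => ?_) hsub
    refine sep_inter_compact_finite hKcompact hr ?_
    rintro _ ⟨a, ha, rfl⟩ _ ⟨b, hb, rfl⟩ hne
    have : a ≠ b := fun h => hne (by rw [h])
    calc r ≤ dist a b := hsep a ha b hb this
    _ = dist (f * a) (f * b) := (hleft f a b).symm
    _ = dist (f • a) (f • b) := rfl
  exact ⟨(Subgroup.fg_iff _).mpr ⟨Λ * Λ ∩ K, hmain, hfin⟩, K, hKcompact, hKgen, hmain⟩
end

section
/- If a uniform approximate lattice Λ in an lcsc group G generates a finitely generated subgroup Λ^∞, then G is compactly generated. -/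
open scoped Pointwise
open Filter Topology

/-- If a uniform approximate lattice `Λ` in an lcsc group `G` generates a
finitely generated subgroup `Λ^∞`, then `G` is compactly generated. -/
theorem compactlyGenerated_of_uniformApproximateLattice_fg
    {G : Type*} [Group G] [MetricSpace G] [IsTopologicalGroup G]
    [ProperSpace G] [SecondCountableTopology G]
    (hleft : ∀ g x y : G, dist (g * x) (g * y) = dist x y)
    (Λ : Set G) (hΛ : IsUniformApproximateLattice Λ)
    (hfg : (Subgroup.closure Λ).FG) :
    ∃ K : Set G, IsCompact K ∧ Subgroup.closure K = ⊤ := by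
  obtain ⟨-, ⟨R, hR, hdense⟩, -, -, -⟩ := hΛ
  obtain ⟨S, hS⟩ := hfg
  refine ⟨(S : Set G) ∪ Metric.closedBall 1 R, ?_, ?_⟩
  · exact (S.finite_toSet.isCompact).union (isCompact_closedBall 1 R)
  · rw [eq_top_iff]
    intro g _
    obtain ⟨x, hxΛ, hx⟩ := hdense g
    have hxmem : x ∈ Subgroup.closure ((S : Set G) ∪ Metric.closedBall 1 R) := by
      have : x ∈ Subgroup.closure (S : Set G) := by
        rw [hS]; exact Subgroup.subset_closure hxΛ
      exact Subgroup.closure_mono Set.subset_union_left this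
    have hymem : x⁻¹ * g ∈ Subgroup.closure ((S : Set G) ∪ Metric.closedBall 1 R) := by
      apply Subgroup.subset_closure
      apply Set.mem_union_right
      simp only [Metric.mem_closedBall]
      have h1 : dist (x⁻¹ * g) (x⁻¹ * x) = dist g x := hleft x⁻¹ g x
      have h2 : dist (x⁻¹ * g) 1 = dist g x := by simpa using h1
      rw [h2]; exact hx.le
    simpa using mul_mem hxmem hymem
end

section
/- Let G be an lcsc group and Λ ⊂ G a closed subset. Then Λ is relatively dense in G if and only if the empty set does not belong to the right-hull X_Λ, the closure of the orbit {gΛ : g ∈ G} in the Chabauty–Fell space of closed subsets of G. -/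
open scoped Pointwise
open Filter Topology

/-- The Chabauty–Fell topology on subsets of a topological space `X`. -/
def chabautyFell (X : Type*) [TopologicalSpace X] : TopologicalSpace (Set X) :=
  TopologicalSpace.generateFrom
    ({U | ∃ K : Set X, IsCompact K ∧ U = {A : Set X | A ∩ K = ∅}} ∪
     {U | ∃ V : Set X, IsOpen V ∧ U = {A : Set X | (A ∩ V).Nonempty}})

/-- The right-hull of `Λ ⊆ G`: the Chabauty–Fell closure of the left-translation orbit
`{gΛ : g ∈ G}`. -/
def rightHull {G : Type*} [Group G] [TopologicalSpace G] (Λ : Set G) : Set (Set G) :=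
  @closure (Set G) (chabautyFell G) {A : Set G | ∃ g : G, A = g • Λ}

lemma cf_aux {X : Type*} [TopologicalSpace X] {U : Set (Set X)}
    (h : TopologicalSpace.GenerateOpen
      ({U | ∃ K : Set X, IsCompact K ∧ U = {A : Set X | A ∩ K = ∅}} ∪
       {U | ∃ V : Set X, IsOpen V ∧ U = {A : Set X | (A ∩ V).Nonempty}}) U) :
    (∅ : Set X) ∈ U → ∃ K : Set X, IsCompact K ∧ {A : Set X | A ∩ K = ∅} ⊆ U := by
  induction h with
  | basic V hV =>
    intro he
    rcases hV with ⟨K, hK, rfl⟩ | ⟨W, hW, rfl⟩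
    · exact ⟨K, hK, subset_rfl⟩
    · simp at he
  | univ => exact fun _ => ⟨∅, isCompact_empty, fun _ _ => trivial⟩
  | inter U V _ _ ihU ihV =>
    intro he
    obtain ⟨K1, hK1, h1⟩ := ihU he.1
    obtain ⟨K2, hK2, h2⟩ := ihV he.2
    refine ⟨K1 ∪ K2, hK1.union hK2, fun A hA => ⟨h1 ?_, h2 ?_⟩⟩ <;>
    · simp only [Set.mem_setOf_eq, Set.inter_union_distrib_left,
        Set.union_empty_iff] at hA ⊢
      tauto
  | sUnion S _ ih =>
    rintro ⟨U, hU, hUe⟩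
    obtain ⟨K, hK, hs⟩ := ih U hU hUe
    exact ⟨K, hK, hs.trans (Set.subset_sUnion_of_mem hU)⟩

/-- A closed subset `Λ` of an lcsc group `G` is relatively dense iff the
empty set does not belong to the right-hull `X_Λ`. -/
theorem relativelyDense_iff_empty_not_mem_rightHull
    {G : Type*} [Group G] [TopologicalSpace G] [IsTopologicalGroup G]
    [LocallyCompactSpace G] [SecondCountableTopology G] [T2Space G]
    (Λ : Set G) (hΛ : IsClosed Λ) :
    (∃ K : Set G, IsCompact K ∧ Λ * K = Set.univ) ↔ (∅ : Set G) ∉ rightHull Λ := by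
  letI : TopologicalSpace (Set G) := chabautyFell G
  constructor
  · rintro ⟨K, hK, hcov⟩ hmem
    have hU : IsOpen {A : Set G | A ∩ K⁻¹ = ∅} :=
      TopologicalSpace.GenerateOpen.basic _ (Or.inl ⟨K⁻¹, hK.inv, rfl⟩)
    rw [rightHull] at hmem
    obtain ⟨A, hA1, g, rfl⟩ := mem_closure_iff.1 hmem _ hU (by simp)
    have hg : g⁻¹ ∈ Λ * K := hcov ▸ Set.mem_univ _
    obtain ⟨l, hl, k, hk, hlk⟩ := hg
    have hmem2 : g * l ∈ (g • Λ) ∩ K⁻¹ := by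
      refine ⟨Set.smul_mem_smul_set hl, ?_⟩
      have : g * l = k⁻¹ := by
        have : l = g⁻¹ * k⁻¹ := by
          rw [← hlk]; group
        rw [this]; group
      rw [this, Set.mem_inv, inv_inv]; exact hk
    rw [Set.mem_setOf_eq] at hA1
    rw [hA1] at hmem2
    exact hmem2
  · intro h
    have hop : IsOpen (rightHull Λ)ᶜ := by
      rw [rightHull]; exact isClosed_closure.isOpen_compl
    obtain ⟨K, hK, hsub⟩ := cf_aux hop h
    refine ⟨K⁻¹, hK.inv, Set.eq_univ_of_forall fun g => ?_⟩
    have horb : g⁻¹ • Λ ∈ rightHull Λ := by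
      rw [rightHull]
      exact subset_closure ⟨g⁻¹, rfl⟩
    have hne : (g⁻¹ • Λ) ∩ K ≠ ∅ := fun he => (hsub he) horb
    obtain ⟨x, hx1, hx2⟩ := Set.nonempty_iff_ne_empty.2 hne
    obtain ⟨l, hl, rfl⟩ := hx1
    refine ⟨l, hl, l⁻¹ * g, ?_, by group⟩
    rw [Set.mem_inv]
    have : (l⁻¹ * g)⁻¹ = g⁻¹ * l := by group
    rw [this]; exact hx2
end

section
/- Let G be an lcsc group, Λ ⊂ G a closed subset, and P ∈ X_Λ an element of the right-hull of Λ (the Chabauty–Fell orbit closure of Λ under left translations). Then P⁻¹P is contained in the closure of Λ⁻¹Λ. -/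
open scoped Pointwise
open Filter Topology

/-- For a closed subset `Λ` of an lcsc group `G` and `P ∈ X_Λ`,
one has `P⁻¹P ⊆ closure (Λ⁻¹Λ)`. -/
theorem rightHull_inv_mul_subset_closure
    {G : Type*} [Group G] [TopologicalSpace G] [IsTopologicalGroup G]
    [LocallyCompactSpace G] [SecondCountableTopology G] [T2Space G]
    (Λ : Set G) (hΛ : IsClosed Λ) (P : Set G) (hP : P ∈ rightHull Λ) :
    P⁻¹ * P ⊆ closure (Λ⁻¹ * Λ) := by
  rintro z ⟨x, hx, y, hy, rfl⟩
  rw [Set.mem_inv] at hx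
  rw [mem_closure_iff]
  intro W hW hzW
  -- continuity of (a,b) ↦ a⁻¹ * b
  have hcont : Continuous fun p : G × G => p.1⁻¹ * p.2 := by continuity
  have hpre : IsOpen ((fun p : G × G => p.1⁻¹ * p.2) ⁻¹' W) := hW.preimage hcont
  have hmem : (x⁻¹, y) ∈ (fun p : G × G => p.1⁻¹ * p.2) ⁻¹' W := by
    simpa using hzW
  obtain ⟨U, V, hU, hV, hxU, hyV, hUV⟩ := isOpen_prod_iff.1 hpre _ _ hmem
  -- the Chabauty–Fell open set
  letI := chabautyFell G
  have hOU : IsOpen {A : Set G | (A ∩ U).Nonempty} :=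
    TopologicalSpace.isOpen_generateFrom_of_mem (Or.inr ⟨U, hU, rfl⟩)
  have hOV : IsOpen {A : Set G | (A ∩ V).Nonempty} :=
    TopologicalSpace.isOpen_generateFrom_of_mem (Or.inr ⟨V, hV, rfl⟩)
  have hO : IsOpen ({A : Set G | (A ∩ U).Nonempty} ∩ {A : Set G | (A ∩ V).Nonempty}) :=
    hOU.inter hOV
  have hPO : P ∈ ({A : Set G | (A ∩ U).Nonempty} ∩ {A : Set G | (A ∩ V).Nonempty}) :=
    ⟨⟨x⁻¹, hx, hxU⟩, ⟨y, hy, hyV⟩⟩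
  have := (mem_closure_iff.1 hP) _ hO hPO
  obtain ⟨A, ⟨⟨a, haA, haU⟩, ⟨b, hbA, hbV⟩⟩, g, rfl⟩ := this
  obtain ⟨l1, hl1, rfl⟩ := haA
  obtain ⟨l2, hl2, rfl⟩ := hbA
  refine ⟨l1⁻¹ * l2, ?_, l1⁻¹, Set.inv_mem_inv.2 hl1, l2, hl2, rfl⟩
  have := hUV (Set.mk_mem_prod haU hbV)
  simpa [smul_eq_mul, mul_assoc] using this
end

section
/- Let Λ ⊂ G be a subset of finite local complexity (Λ⁻¹Λ closed and discrete) in an lcsc group G. Then there exists an open set U ⊂ G such that |P ∩ gU| ≤ 1 for all P in the right-hull X_Λ and all g ∈ G. In particular, for every compact K ⊂ G there is a constant C_K with |P ∩ K| < C_K for all P ∈ X_Λ. -/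
open scoped Pointwise
open Filter Topology

/-- If `Λ ⊆ G` has finite local complexity (`Λ⁻¹Λ` closed and discrete),
then there is a (nonempty) open `U ⊆ G` with `|P ∩ gU| ≤ 1` for all `P ∈ X_Λ`, `g ∈ G`;
in particular, for every compact `K` there is `C_K` with `|P ∩ K| < C_K` for all
`P ∈ X_Λ`. -/
theorem rightHull_uniformly_locally_finite_of_flc
    {G : Type*} [Group G] [TopologicalSpace G] [IsTopologicalGroup G]
    [LocallyCompactSpace G] [SecondCountableTopology G] [T2Space G]
    (Λ : Set G) (hclosed : IsClosed (Λ⁻¹ * Λ)) (hdisc : DiscreteTopology ↥(Λ⁻¹ * Λ)) :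
    (∃ U : Set G, IsOpen U ∧ U.Nonempty ∧
        ∀ P ∈ rightHull Λ, ∀ g : G, (P ∩ g • U).Subsingleton) ∧
      ∀ K : Set G, IsCompact K →
        ∃ C : ℕ, ∀ P ∈ rightHull Λ, (P ∩ K).Finite ∧ (P ∩ K).ncard < C := by
  classical
  set S : Set G := Λ⁻¹ * Λ with hS
  -- Step 1: an open neighborhood `V` of `1` with `V ∩ S ⊆ {1}`.
  obtain ⟨V, hVopen, hV1, hVS⟩ : ∃ V : Set G, IsOpen V ∧ (1 : G) ∈ V ∧
      ∀ x ∈ V, x ∈ S → x = 1 := by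
    by_cases h1 : (1 : G) ∈ S
    · have hopen : IsOpen ({(⟨1, h1⟩ : ↥S)} : Set ↥S) := isOpen_discrete _
      rw [isOpen_induced_iff] at hopen
      obtain ⟨t, ht, htpre⟩ := hopen
      refine ⟨t, ht, ?_, ?_⟩
      · have : (⟨1, h1⟩ : ↥S) ∈ Subtype.val ⁻¹' t := by rw [htpre]; exact rfl
        exact this
      · intro x hxt hxS
        have : (⟨x, hxS⟩ : ↥S) ∈ Subtype.val ⁻¹' t := hxt
        rw [htpre] at this
        exact congrArg Subtype.val this
    · exact ⟨Sᶜ, hclosed.isOpen_compl, h1, fun x hx hxS => absurd hxS hx⟩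
  -- Step 2: an open `U ∋ 1` with `a⁻¹ * b ∈ V` for all `a b ∈ U`.
  obtain ⟨W, hWopen, hW1, hWW⟩ := exists_open_nhds_one_mul_subset (hVopen.mem_nhds hV1)
  set U : Set G := W ∩ W⁻¹ with hUdef
  have hUopen : IsOpen U := hWopen.inter hWopen.inv
  have hU1 : (1 : G) ∈ U := ⟨hW1, by simpa using hW1⟩
  have hUV : ∀ a ∈ U, ∀ b ∈ U, a⁻¹ * b ∈ V := fun a ha b hb =>
    hWW (Set.mul_mem_mul (Set.mem_inv.1 ha.2) hb.1)
  letI : TopologicalSpace (Set G) := chabautyFell G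
  -- Step 3: the subsingleton property on the hull.
  have key : ∀ P ∈ rightHull Λ, ∀ g : G, (P ∩ g • U).Subsingleton := by
    intro P hP g x hx y hy
    by_contra hxy
    obtain ⟨Ox, Oy, hOx, hOy, hxOx, hyOy, hdisj⟩ := t2_separation hxy
    have hgU : IsOpen (g • U) := hUopen.smul g
    set W₁ : Set G := Ox ∩ g • U with hW₁
    set W₂ : Set G := Oy ∩ g • U with hW₂
    have h₁ : IsOpen {A : Set G | (A ∩ W₁).Nonempty} :=
      TopologicalSpace.isOpen_generateFrom_of_mem (Or.inr ⟨W₁, hOx.inter hgU, rfl⟩)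
    have h₂ : IsOpen {A : Set G | (A ∩ W₂).Nonempty} :=
      TopologicalSpace.isOpen_generateFrom_of_mem (Or.inr ⟨W₂, hOy.inter hgU, rfl⟩)
    have hPO : P ∈ {A : Set G | (A ∩ W₁).Nonempty} ∩ {A : Set G | (A ∩ W₂).Nonempty} :=
      ⟨⟨x, hx.1, hxOx, hx.2⟩, ⟨y, hy.1, hyOy, hy.2⟩⟩
    obtain ⟨A, hAO, hA⟩ := mem_closure_iff.1 hP _ (h₁.inter h₂) hPO
    obtain ⟨h, rfl⟩ := hA
    obtain ⟨a, haA, haW₁⟩ := hAO.1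
    obtain ⟨b, hbA, hbW₂⟩ := hAO.2
    have hab : a ≠ b := fun hEq => Set.disjoint_left.1 hdisj haW₁.1 (hEq ▸ hbW₂.1)
    obtain ⟨l₁, hl₁, rfl⟩ := haA
    obtain ⟨l₂, hl₂, hbeq⟩ := hbA
    obtain ⟨u₁, hu₁, hu₁eq⟩ := haW₁.2
    obtain ⟨u₂, hu₂, hu₂eq⟩ := hbW₂.2
    have e1 : g * u₁ = h * l₁ := hu₁eq
    have e2 : g * u₂ = b := hu₂eq
    have e3 : h * l₂ = b := hbeq
    have hmemS : (h * l₁)⁻¹ * b ∈ S := by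
      rw [← e3]
      have : (h * l₁)⁻¹ * (h * l₂) = l₁⁻¹ * l₂ := by group
      rw [this]
      exact Set.mul_mem_mul (Set.inv_mem_inv.2 hl₁) hl₂
    have hmemV : (h * l₁)⁻¹ * b ∈ V := by
      rw [← e2, ← e1]
      have : (g * u₁)⁻¹ * (g * u₂) = u₁⁻¹ * u₂ := by group
      rw [this]
      exact hUV _ hu₁ _ hu₂
    have hone : (h * l₁)⁻¹ * b = 1 := hVS _ hmemV hmemS
    exact hab (inv_mul_eq_one.1 hone)
  refine ⟨⟨U, hUopen, ⟨1, hU1⟩, key⟩, ?_⟩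
  -- Step 4: uniform bound on compact sets.
  intro K hK
  have hcover : K ⊆ ⋃ k ∈ K, k • U := fun x hx =>
    Set.mem_biUnion hx ⟨1, hU1, mul_one x⟩
  obtain ⟨t, htK, htfin, htcover⟩ :=
    hK.elim_finite_subcover_image (fun k _ => hUopen.smul k) hcover
  refine ⟨t.ncard + 1, fun P hP => ?_⟩
  set f : G → G := fun x => if h : ∃ k ∈ t, x ∈ k • U then h.choose else 1 with hf
  have hfspec : ∀ x ∈ P ∩ K, f x ∈ t ∧ x ∈ f x • U := by
    intro x hx
    have hex : ∃ k ∈ t, x ∈ k • U := by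
      obtain ⟨k, hk, hxk⟩ := Set.mem_iUnion₂.1 (htcover hx.2)
      exact ⟨k, hk, hxk⟩
    rw [hf]
    simp only [dif_pos hex]
    exact ⟨hex.choose_spec.1, hex.choose_spec.2⟩
  have hinj : Set.InjOn f (P ∩ K) := by
    intro x hx y hy hEq
    exact key P hP (f x) ⟨hx.1, (hfspec x hx).2⟩ ⟨hy.1, hEq ▸ (hfspec y hy).2⟩
  have hmaps : ∀ x ∈ P ∩ K, f x ∈ t := fun x hx => (hfspec x hx).1
  have hfinite : (P ∩ K).Finite :=
    Set.Finite.of_finite_image (htfin.subset (Set.image_subset_iff.2 hmaps)) hinj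
  exact ⟨hfinite, Nat.lt_succ_of_le (Set.ncard_le_ncard_of_injOn f hmaps hinj htfin)⟩
end

section
/- Let G be an lcsc group with Haar measure, Λ ⊂ G a closed subset such that the right-hull X_Λ carries a G-invariant Borel probability measure ν with ν({∅}) = 0. Then for every ε > 0 there exists a finite set F ⊂ G such that G = F·B_ε(e)·Λ⁻¹Λ·B_ε(e). In particular Λ⁻¹Λ is bi-syndetic. -/
open scoped Pointwise
open Filter Topology MeasureTheory

/-- The Borel σ-algebra of the Chabauty–Fell topology. -/
def hullMS (X : Type*) [TopologicalSpace X] : MeasurableSpace (Set X) :=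
  @borel (Set X) (chabautyFell X)

/-- If the right-hull of a closed subset `Λ` of an lcsc group `G` carries a
`G`-invariant Borel probability measure `ν` with `ν({∅}) = 0`, then for every `ε > 0`
there is a finite `F ⊆ G` with `G = F ⬝ B_ε(e) ⬝ Λ⁻¹Λ ⬝ B_ε(e)`; in particular `Λ⁻¹Λ`
is bi-syndetic. -/
theorem bi_syndetic_of_invariant_measure_on_hull
    {G : Type*} [Group G] [MetricSpace G] [IsTopologicalGroup G]
    [ProperSpace G] [SecondCountableTopology G]
    (hleft : ∀ g x y : G, dist (g * x) (g * y) = dist x y)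
    (Λ : Set G) (hΛ : IsClosed Λ)
    (ν : @Measure (Set G) (hullMS G))
    (hprob : ν Set.univ = 1) (hsupp : ν (rightHull Λ) = 1)
    (hinv : ∀ g : G,
      @Measure.map (Set G) (Set G) (hullMS G) (hullMS G) (fun A => g • A) ν = ν)
    (hempty : ν {(∅ : Set G)} = 0) :
    (∀ ε > (0 : ℝ), ∃ F : Finset G,
        (F : Set G) * Metric.ball (1 : G) ε * (Λ⁻¹ * Λ) * Metric.ball (1 : G) ε =
          Set.univ) ∧
      ∃ K L : Set G, IsCompact K ∧ IsCompact L ∧ K * (Λ⁻¹ * Λ) * L = Set.univ := by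
  classical
  letI : TopologicalSpace (Set G) := chabautyFell G
  letI : MeasurableSpace (Set G) := hullMS G
  haveI : BorelSpace (Set G) := ⟨rfl⟩
  haveI : IsFiniteMeasure ν := ⟨by rw [hprob]; exact ENNReal.one_lt_top⟩
  have hhito : ∀ W : Set G, IsOpen W → IsOpen {A : Set G | (A ∩ W).Nonempty} := by
    intro W hW
    exact TopologicalSpace.isOpen_generateFrom_of_mem (Or.inr ⟨W, hW, rfl⟩)
  have hhitm : ∀ W : Set G, IsOpen W → MeasurableSet {A : Set G | (A ∩ W).Nonempty} :=
    fun W hW => (hhito W hW).measurableSet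
  have hTpre : ∀ (g : G) (W : Set G),
      (fun A : Set G => g • A) ⁻¹' {A | (A ∩ W).Nonempty} = {A | (A ∩ g⁻¹ • W).Nonempty} := by
    intro g W
    ext A
    have h : g • (A ∩ g⁻¹ • W) = g • A ∩ W := by rw [Set.smul_set_inter, smul_inv_smul]
    simp only [Set.mem_preimage, Set.mem_setOf_eq]
    rw [← h, Set.smul_set_nonempty]
  have hTcont : ∀ g : G, Continuous (fun A : Set G => g • A) := by
    intro g
    refine continuous_generateFrom_iff.mpr ?_
    rintro s (⟨K, hK, rfl⟩ | ⟨W, hW, rfl⟩)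
    · have h1 : (fun A : Set G => g • A) ⁻¹' {A | A ∩ K = ∅} = {A | A ∩ g⁻¹ • K = ∅} := by
        ext A
        have h : g • (A ∩ g⁻¹ • K) = g • A ∩ K := by rw [Set.smul_set_inter, smul_inv_smul]
        simp only [Set.mem_preimage, Set.mem_setOf_eq]
        rw [← h, Set.smul_set_eq_empty]
      rw [h1]
      exact TopologicalSpace.isOpen_generateFrom_of_mem (Or.inl ⟨g⁻¹ • K, hK.smul g⁻¹, rfl⟩)
    · rw [hTpre]
      exact TopologicalSpace.isOpen_generateFrom_of_mem (Or.inr ⟨g⁻¹ • W, hW.smul g⁻¹, rfl⟩)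
  have hmap : ∀ (g : G) (S : Set (Set G)), MeasurableSet S →
      ν ((fun A : Set G => g • A) ⁻¹' S) = ν S := by
    intro g S hS
    conv_rhs => rw [← hinv g]
    exact (Measure.map_apply (hTcont g).measurable hS).symm
  have hithit : ∀ (g : G) (W : Set G), IsOpen W →
      ν {A : Set G | (A ∩ g • W).Nonempty} = ν {A : Set G | (A ∩ W).Nonempty} := by
    intro g W hW
    have h := hmap g⁻¹ {A : Set G | (A ∩ W).Nonempty} (hhitm W hW)
    rw [hTpre g⁻¹ W, inv_inv] at h
    exact h
  have hhullm : MeasurableSet (rightHull Λ) := by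
    have h : IsClosed (rightHull Λ) := isClosed_closure
    exact h.measurableSet
  have hcompl : ν (rightHull Λ)ᶜ = 0 := by
    have h := measure_compl hhullm (measure_ne_top ν _)
    rw [hprob, hsupp] at h
    simpa using h
  have main : ∀ ε : ℝ, ε > 0 → ∃ F : Finset G,
      (F : Set G) * Metric.ball (1 : G) ε * (Λ⁻¹ * Λ) * Metric.ball (1 : G) ε = Set.univ := by
    intro ε hε
    set V : Set G := Metric.ball (1:G) ε ∩ (Metric.ball (1:G) ε)⁻¹ with hVdef
    have hVo : IsOpen V := Metric.isOpen_ball.inter Metric.isOpen_ball.inv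
    have h1V : (1:G) ∈ V := ⟨Metric.mem_ball_self hε, by
      rw [Set.mem_inv, inv_one]; exact Metric.mem_ball_self hε⟩
    -- positivity
    have hone : (1:ENNReal) ≤ ν {A : Set G | A.Nonempty} := by
      have hsub : (Set.univ : Set (Set G)) ⊆ {A : Set G | A.Nonempty} ∪ {(∅ : Set G)} := by
        intro A _
        rcases A.eq_empty_or_nonempty with h | h
        · exact Or.inr (by simp [h])
        · exact Or.inl h
      calc (1:ENNReal) = ν Set.univ := hprob.symm
        _ ≤ ν ({A : Set G | A.Nonempty} ∪ {(∅ : Set G)}) := measure_mono hsub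
        _ ≤ ν {A : Set G | A.Nonempty} + ν {(∅ : Set G)} := measure_union_le _ _
        _ = ν {A : Set G | A.Nonempty} := by rw [hempty, add_zero]
    obtain ⟨D, hDc, hDd⟩ := TopologicalSpace.exists_countable_dense G
    have hcov : {A : Set G | A.Nonempty} ⊆ ⋃ g ∈ D, {A : Set G | (A ∩ g • V).Nonempty} := by
      rintro A ⟨x, hx⟩
      have hxo : IsOpen (x • V⁻¹) := (hVo.inv).smul x
      have hxne : (x • V⁻¹).Nonempty :=
        ⟨x • (1:G)⁻¹, Set.smul_mem_smul_set (by rw [Set.mem_inv, inv_inv]; exact h1V)⟩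
      obtain ⟨g, hgD, hgx⟩ := hDd.exists_mem_open hxo hxne
      refine Set.mem_biUnion hgD ?_
      obtain ⟨v, hv, hgv⟩ := hgx
      refine ⟨x, hx, ⟨v⁻¹, Set.mem_inv.mp hv, ?_⟩⟩
      have hgv' : x * v = g := hgv
      show g * v⁻¹ = x
      rw [← hgv', mul_inv_cancel_right]
    have hcpos : ν {A : Set G | (A ∩ V).Nonempty} ≠ 0 := by
      intro h0
      have hz : ν (⋃ g ∈ D, {A : Set G | (A ∩ g • V).Nonempty}) = 0 := by
        refine (measure_biUnion_null_iff hDc).mpr ?_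
        intro g _
        rw [hithit g V hVo]; exact h0
      have hle := (measure_mono hcov).trans hz.le
      exact absurd (hone.trans hle) (by norm_num)
    set c := ν {A : Set G | (A ∩ V).Nonempty} with hcdef
    have hctop : c ≠ ⊤ := measure_ne_top ν _
    obtain ⟨n₀, hn₀⟩ := ENNReal.exists_nat_gt (show (1:ENNReal)/c ≠ ⊤ by
      simp [ENNReal.div_eq_top, hcpos])
    set P : Finset G → Prop := fun F => ∀ f ∈ F, ∀ f' ∈ F, f ≠ f' →
      ν ({A : Set G | (A ∩ f • V).Nonempty} ∩ {A : Set G | (A ∩ f' • V).Nonempty}) = 0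
      with hPdef
    have hcard : ∀ F : Finset G, P F → F.card < n₀ := by
      intro F hF
      have hdisj : (↑F : Set G).Pairwise
          (Function.onFun (MeasureTheory.AEDisjoint ν) fun f => {A : Set G | (A ∩ f • V).Nonempty}) := by
        intro f hf f' hf' hne
        exact hF f hf f' hf' hne
      have hsum : ν (⋃ f ∈ F, {A : Set G | (A ∩ f • V).Nonempty}) =
          ∑ f ∈ F, ν {A : Set G | (A ∩ f • V).Nonempty} :=
        measure_biUnion_finset₀ hdisj (fun f _ => (hhitm _ (hVo.smul f)).nullMeasurableSet)
      have hsum' : (F.card : ENNReal) * c ≤ 1 := by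
        have he : ∑ f ∈ F, ν {A : Set G | (A ∩ f • V).Nonempty} = (F.card : ENNReal) * c := by
          rw [Finset.sum_congr rfl (fun f _ => hithit f V hVo)]
          simp [Finset.sum_const, nsmul_eq_mul, hcdef]
        calc (F.card : ENNReal) * c = ν (⋃ f ∈ F, {A : Set G | (A ∩ f • V).Nonempty}) := by
              rw [hsum, he]
          _ ≤ ν Set.univ := measure_mono (Set.subset_univ _)
          _ = 1 := hprob
      have h1 : (F.card : ENNReal) < n₀ := by
        by_contra hle
        push_neg at hle
        have h2 : (1:ENNReal)/c < (F.card : ENNReal) := lt_of_lt_of_le hn₀ hle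
        have h3 := (ENNReal.div_lt_iff (Or.inl hcpos) (Or.inl hctop)).mp h2
        exact absurd hsum' (not_le.mpr h3)
      exact_mod_cast h1
    set Q : ℕ → Prop := fun n => ∃ F : Finset G, P F ∧ F.card = n with hQdef
    have hQ0 : Q 0 := ⟨∅, fun f hf => absurd hf (Finset.notMem_empty f), rfl⟩
    have hQn : Q (Nat.findGreatest Q n₀) := Nat.findGreatest_spec (Nat.zero_le n₀) hQ0
    obtain ⟨F, hF, hFcard⟩ := hQn
    have hmax : ∀ g : G, ∃ f ∈ F,
        ν ({A : Set G | (A ∩ f • V).Nonempty} ∩ {A : Set G | (A ∩ g • V).Nonempty}) ≠ 0 := by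
      intro g
      by_cases hg : g ∈ F
      · refine ⟨g, hg, ?_⟩
        rw [Set.inter_self, hithit g V hVo]
        exact hcpos
      · by_contra hcon
        push_neg at hcon
        have hP' : P (insert g F) := by
          intro f hf f' hf' hne
          rcases Finset.mem_insert.mp hf with rfl | hf2
          · rcases Finset.mem_insert.mp hf' with rfl | hf'2
            · exact absurd rfl hne
            · rw [Set.inter_comm]; exact hcon f' hf'2
          · rcases Finset.mem_insert.mp hf' with rfl | hf'2
            · exact hcon f hf2
            · exact hF f hf2 f' hf'2 hne
        have hle : (insert g F).card ≤ Nat.findGreatest Q n₀ :=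
          Nat.le_findGreatest (le_of_lt (hcard _ hP')) ⟨_, hP', rfl⟩
        rw [Finset.card_insert_of_notMem hg, hFcard] at hle
        omega
    refine ⟨F, ?_⟩
    rw [Set.eq_univ_iff_forall]
    intro g
    obtain ⟨f, hfF, hne⟩ := hmax g
    set S := {A : Set G | (A ∩ f • V).Nonempty} ∩ {A : Set G | (A ∩ g • V).Nonempty} with hSdef
    have hpos : ν (S ∩ rightHull Λ) ≠ 0 := by
      intro h0
      apply hne
      have hle : ν S ≤ ν (S ∩ rightHull Λ) + ν (rightHull Λ)ᶜ := by
        refine (measure_mono ?_).trans (measure_union_le _ _)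
        intro A hA
        by_cases hAh : A ∈ rightHull Λ
        · exact Or.inl ⟨hA, hAh⟩
        · exact Or.inr hAh
      rw [h0, hcompl, add_zero] at hle
      exact le_antisymm hle zero_le
    obtain ⟨A, hAS, hAhull⟩ := nonempty_of_measure_ne_zero hpos
    have hSo : IsOpen S := (hhito _ (hVo.smul f)).inter (hhito _ (hVo.smul g))
    have hAc : A ∈ closure {B : Set G | ∃ k : G, B = k • Λ} := hAhull
    obtain ⟨B, hBS, k, rfl⟩ := mem_closure_iff.mp hAc S hSo hAS
    obtain ⟨⟨x, hx1, hx2⟩, ⟨y, hy1, hy2⟩⟩ := hBS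
    obtain ⟨l1, hl1, hxl⟩ := hx1
    obtain ⟨v1, hv1, hxv⟩ := hx2
    obtain ⟨l2, hl2, hyl⟩ := hy1
    obtain ⟨v2, hv2, hyv⟩ := hy2
    have e1 : k * l1 = f * v1 := by
      have := hxl.trans hxv.symm
      simpa [smul_eq_mul] using this
    have e2 : k * l2 = g * v2 := by
      have := hyl.trans hyv.symm
      simpa [smul_eq_mul] using this
    have hk : k = f * v1 * l1⁻¹ := by rw [eq_mul_inv_iff_mul_eq]; exact e1
    have hg2 : g = k * l2 * v2⁻¹ := by rw [eq_mul_inv_iff_mul_eq]; exact e2.symm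
    have hgeq : g = f * v1 * (l1⁻¹ * l2) * v2⁻¹ := by rw [hg2, hk]; group
    have hv1' : v1 ∈ Metric.ball (1:G) ε := hv1.1
    have hv2' : v2⁻¹ ∈ Metric.ball (1:G) ε := Set.mem_inv.mp hv2.2
    rw [hgeq]
    exact Set.mul_mem_mul (Set.mul_mem_mul (Set.mul_mem_mul hfF hv1')
      (Set.mul_mem_mul (Set.inv_mem_inv.mpr hl1) hl2)) hv2'
  refine ⟨main, ?_⟩
  obtain ⟨F, hFeq⟩ := main 1 one_pos
  refine ⟨(↑F : Set G) * Metric.closedBall (1:G) 1, Metric.closedBall (1:G) 1,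
    (F.finite_toSet.isCompact).mul (isCompact_closedBall _ _), isCompact_closedBall _ _, ?_⟩
  apply Set.eq_univ_of_univ_subset
  rw [← hFeq]
  exact Set.mul_subset_mul (Set.mul_subset_mul
    (Set.mul_subset_mul (subset_refl _) Metric.ball_subset_closedBall) (subset_refl _))
    Metric.ball_subset_closedBall
end

section
/- If G is a discrete group and Λ ⊂ G is a subset whose right-hull X_Λ (in the space of subsets of G with product topology) carries a non-trivial G-invariant probability measure (giving zero mass to the empty set), then Λ⁻¹Λ is right-syndetic: there is a finite set F ⊂ G with Λ⁻¹Λ·F = G. -/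
open scoped Pointwise
open Filter Topology MeasureTheory

section Aux

set_option linter.unusedSectionVars false

variable {G : Type*} [Group G] [TopologicalSpace G] [DiscreteTopology G]

/-- In the Chabauty–Fell topology on subsets of a discrete space, the "point event"
`{A | g ∈ A}` is open. -/
lemma cf_isOpen_mem (g : G) :
    @IsOpen (Set G) (chabautyFell G) {A : Set G | g ∈ A} := by
  apply TopologicalSpace.GenerateOpen.basic
  right
  refine ⟨{g}, isOpen_discrete _, ?_⟩
  ext A
  simp [Set.Nonempty]

/-- Translation is continuous in the Chabauty–Fell topology. -/
lemma cf_continuous_smul (g : G) :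
    @Continuous (Set G) (Set G) (chabautyFell G) (chabautyFell G) (fun A => g • A) := by
  letI := chabautyFell G
  refine continuous_generateFrom_iff.mpr ?_
  rintro s (⟨K, hK, rfl⟩ | ⟨V, hV, rfl⟩)
  · have hpre : (fun A : Set G => g • A) ⁻¹' {A | A ∩ K = ∅}
        = {A : Set G | A ∩ g⁻¹ • K = ∅} := by
      ext A
      have : g • A ∩ K = g • (A ∩ g⁻¹ • K) := by
        rw [Set.smul_set_inter, smul_inv_smul]
      simp only [Set.mem_preimage, Set.mem_setOf_eq, this, Set.smul_set_eq_empty]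
    rw [hpre]
    apply TopologicalSpace.GenerateOpen.basic
    left
    refine ⟨g⁻¹ • K, ?_, rfl⟩
    have : g⁻¹ • K = (fun x : G => g⁻¹ • x) '' K := (Set.image_smul).symm
    rw [this]
    exact hK.image continuous_of_discreteTopology
  · have hpre : (fun A : Set G => g • A) ⁻¹' {A | (A ∩ V).Nonempty}
        = {A : Set G | (A ∩ g⁻¹ • V).Nonempty} := by
      ext A
      have : g • A ∩ V = g • (A ∩ g⁻¹ • V) := by
        rw [Set.smul_set_inter, smul_inv_smul]
      simp only [Set.mem_preimage, Set.mem_setOf_eq, this, Set.smul_set_nonempty]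
    rw [hpre]
    apply TopologicalSpace.GenerateOpen.basic
    right
    exact ⟨g⁻¹ • V, isOpen_discrete _, rfl⟩

/-- Any two elements of a member of the right-hull of `Λ` differ by
an element of `Λ⁻¹ * Λ`. -/
lemma rightHull_diff {Λ : Set G} {A : Set G} (hA : A ∈ rightHull Λ) {x y : G}
    (hx : x ∈ A) (hy : y ∈ A) : x⁻¹ * y ∈ Λ⁻¹ * Λ := by
  letI := chabautyFell G
  have hop : IsOpen ({B : Set G | x ∈ B} ∩ {B : Set G | y ∈ B}) :=
    (cf_isOpen_mem x).inter (cf_isOpen_mem y)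
  have hne := mem_closure_iff.mp hA _ hop ⟨hx, hy⟩
  obtain ⟨B, ⟨hxB, hyB⟩, k, rfl⟩ := hne
  obtain ⟨a, ha, hax⟩ := hxB
  obtain ⟨b, hb, hby⟩ := hyB
  refine ⟨a⁻¹, Set.mem_inv.mpr (by simpa using ha), b, hb, ?_⟩
  have hax' : k * a = x := hax
  have hby' : k * b = y := hby
  subst hax' hby'
  group

end Aux

/-- If `G` is a countable discrete group and `Λ ⊆ G` a subset whose
right-hull carries a non-trivial `G`-invariant probability measure (zero mass on `∅`),
then `Λ⁻¹Λ` is right-syndetic: `Λ⁻¹Λ ⬝ F = G` for some finite `F`. -/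
theorem folner_right_syndetic
    {G : Type*} [Group G] [TopologicalSpace G] [DiscreteTopology G] [Countable G]
    (Λ : Set G)
    (ν : @Measure (Set G) (hullMS G))
    (hprob : ν Set.univ = 1) (hsupp : ν (rightHull Λ) = 1)
    (hinv : ∀ g : G,
      @Measure.map (Set G) (Set G) (hullMS G) (hullMS G) (fun A => g • A) ν = ν)
    (hempty : ν {(∅ : Set G)} = 0) :
    ∃ F : Finset G, (Λ⁻¹ * Λ) * (F : Set G) = Set.univ := by
  classical
  letI : TopologicalSpace (Set G) := chabautyFell G
  letI : MeasurableSpace (Set G) := hullMS G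
  haveI : BorelSpace (Set G) := ⟨rfl⟩
  -- basic measurability facts
  have hmeasE : ∀ g : G, MeasurableSet {A : Set G | g ∈ A} := fun g =>
    (cf_isOpen_mem g).measurableSet
  have hmeasHull : MeasurableSet (rightHull Λ) := isClosed_closure.measurableSet
  -- invariance: all point events have the same measure
  have hmap : ∀ g : G, ν {A : Set G | g⁻¹ ∈ A} = ν {A : Set G | (1 : G) ∈ A} := by
    intro g
    have hpre : (fun A : Set G => g • A) ⁻¹' {A : Set G | (1 : G) ∈ A}
        = {A : Set G | g⁻¹ ∈ A} := by
      ext A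
      simp [Set.mem_smul_set_iff_inv_smul_mem]
    calc ν {A : Set G | g⁻¹ ∈ A}
        = ν ((fun A : Set G => g • A) ⁻¹' {A : Set G | (1 : G) ∈ A}) := by rw [hpre]
      _ = Measure.map (fun A : Set G => g • A) ν {A : Set G | (1 : G) ∈ A} :=
          (Measure.map_apply (cf_continuous_smul g).measurable (hmeasE 1)).symm
      _ = ν {A : Set G | (1 : G) ∈ A} := by rw [hinv g]
  have hmap' : ∀ g : G, ν {A : Set G | g ∈ A} = ν {A : Set G | (1 : G) ∈ A} := by
    intro g
    have := hmap g⁻¹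
    rwa [inv_inv] at this
  -- the measure of the complement of the hull is zero
  have hhullc : ν (rightHull Λ)ᶜ = 0 := by
    have := measure_compl hmeasHull (by rw [hsupp]; exact ENNReal.one_ne_top)
    rw [hprob, hsupp] at this
    simpa using this
  have hcap : ∀ s : Set (Set G), ν (s ∩ rightHull Λ) = ν s := by
    intro s
    refine le_antisymm (measure_mono Set.inter_subset_left) ?_
    calc ν s ≤ ν (s ∩ rightHull Λ) + ν (s \ rightHull Λ) :=
          measure_le_inter_add_diff ν s (rightHull Λ)
      _ ≤ ν (s ∩ rightHull Λ) + ν (rightHull Λ)ᶜ := by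
          gcongr
          exact fun A hA => hA.2
      _ = ν (s ∩ rightHull Λ) := by rw [hhullc, add_zero]
  -- the point event at `1` has positive measure
  have hpos : ν {A : Set G | (1 : G) ∈ A} ≠ 0 := by
    intro h0
    have hzero : ∀ g : G, ν {A : Set G | g ∈ A} = 0 := fun g => by
      rw [hmap' g, h0]
    have hne : ν {A : Set G | A.Nonempty} = 0 := by
      have hU : {A : Set G | A.Nonempty} = ⋃ g : G, {A : Set G | g ∈ A} := by
        ext A; simp [Set.Nonempty]
      rw [hU]
      exact measure_iUnion_null hzero
    have hsub : (Set.univ : Set (Set G)) ⊆ {(∅ : Set G)} ∪ {A : Set G | A.Nonempty} := by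
      intro A _
      rcases A.eq_empty_or_nonempty with h | h
      · exact Or.inl h
      · exact Or.inr h
    have : (1 : ENNReal) ≤ 0 := by
      calc (1 : ENNReal) = ν Set.univ := hprob.symm
        _ ≤ ν ({(∅ : Set G)} ∪ {A : Set G | A.Nonempty}) := measure_mono hsub
        _ ≤ ν {(∅ : Set G)} + ν {A : Set G | A.Nonempty} := measure_union_le _ _
        _ = 0 := by rw [hempty, hne, add_zero]
    simp at this
  -- main argument by contradiction
  by_contra hcon
  push_neg at hcon
  have hstep : ∀ F : Finset G, ∃ g : G, g ∉ (Λ⁻¹ * Λ) * (F : Set G) := fun F =>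
    (Set.ne_univ_iff_exists_notMem _).mp (hcon F)
  choose step hstepspec using hstep
  let Fs : ℕ → Finset G := fun n => Nat.rec (∅ : Finset G) (fun _ F => insert (step F) F) n
  let seq : ℕ → G := fun n => step (Fs n)
  have hFsmono : ∀ i j : ℕ, i ≤ j → Fs i ⊆ Fs j := by
    intro i j hij
    induction j with
    | zero => simp_all
    | succ j ih =>
      rcases Nat.lt_or_ge i (j + 1) with h | h
      · exact (ih (Nat.lt_succ_iff.mp h)).trans (Finset.subset_insert _ _)
      · have : i = j + 1 := le_antisymm hij h
        subst this; exact subset_rfl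
  have hseqmem : ∀ i j : ℕ, i < j → seq i ∈ Fs j := by
    intro i j hij
    have h1 : seq i ∈ Fs (i + 1) := Finset.mem_insert_self _ _
    exact hFsmono (i + 1) j hij h1
  have hkey : ∀ i j : ℕ, i < j → seq j * (seq i)⁻¹ ∉ Λ⁻¹ * Λ := by
    intro i j hij hmem
    apply hstepspec (Fs j)
    exact ⟨seq j * (seq i)⁻¹, hmem, seq i, hseqmem i j hij, by group; rfl⟩
  -- the events
  set D : ℕ → Set (Set G) := fun i => {A : Set G | (seq i)⁻¹ ∈ A} ∩ rightHull Λ with hD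
  have hDmeas : ∀ i : ℕ, MeasurableSet (D i) := fun i =>
    (hmeasE _).inter hmeasHull
  have hDval : ∀ i : ℕ, ν (D i) = ν {A : Set G | (1 : G) ∈ A} := fun i => by
    rw [hD]; rw [hcap, hmap]
  have hDdisj : Pairwise (Function.onFun Disjoint D) := by
    intro i j hij
    refine Set.disjoint_left.mpr ?_
    rintro A ⟨hiA, hAhull⟩ ⟨hjA, _⟩
    have hdd := rightHull_diff hAhull hiA hjA
    rw [inv_inv] at hdd
    -- hdd : seq i * (seq j)⁻¹ ∈ Λ⁻¹ * Λ
    have hsymm : ∀ a : G, a ∈ Λ⁻¹ * Λ → a⁻¹ ∈ Λ⁻¹ * Λ := by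
      rintro a ⟨x, hx, y, hy, rfl⟩
      refine ⟨y⁻¹, Set.mem_inv.mpr (by simpa using hy), x⁻¹, Set.mem_inv.mp hx, by group⟩
    rcases Nat.lt_or_ge i j with h | h
    · apply hkey i j h
      have := hsymm _ hdd
      simpa using this
    · have hji : j < i := by omega
      exact hkey j i hji (by simpa using hdd)
  -- contradiction via infinitely many disjoint sets of equal positive measure
  have hsum : ν (⋃ i, D i) = ∑' i : ℕ, ν (D i) := measure_iUnion hDdisj hDmeas
  have htop : ν (⋃ i, D i) = ⊤ := by
    rw [hsum]
    have : (fun i : ℕ => ν (D i)) = fun _ : ℕ => ν {A : Set G | (1 : G) ∈ A} := by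
      funext i; exact hDval i
    rw [this]
    exact ENNReal.tsum_const_eq_top_of_ne_zero hpos
  have hle : ν (⋃ i, D i) ≤ 1 := by
    rw [← hprob]; exact measure_mono (Set.subset_univ _)
  rw [htop] at hle
  exact (by simp : ¬ (⊤ : ENNReal) ≤ 1) hle
end
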